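/- Let m : [0,1] → [0,1] satisfy the weak Lipschitz condition |m(x) - m(y)| ≤ max(|M - m(x)|, L·|x - y|) and the margin condition: for all ε ∈ (0,1), the Lebesgue measure of {x ∈ [0,1] : |M - m(x)| ≤ ε} is at most Q·ε, where L, Q > 0. If there exists x₀ ∈ [0,1] with m(x₀) = M, then Q·L ≥ 1. -/

import Mathlib

open MeasureTheory

theorem stmt_2 (m : ℝ → ℝ) (M L Q : ℝ)
    (hm : ∀ x ∈ Set.Icc (0:ℝ) 1, m x ∈ Set.Icc (0:ℝ) 1)
    (hM : M ∈ Set.Icc (0:ℝ) 1)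
    (hL : 0 < L) (hQ : 0 < Q)
    (hlip : ∀ x ∈ Set.Icc (0:ℝ) 1, ∀ y ∈ Set.Icc (0:ℝ) 1,
      |m x - m y| ≤ max (|M - m x|) (L * |x - y|))
    (hmargin : ∀ ε ∈ Set.Ioo (0:ℝ) 1,
      volume {x ∈ Set.Icc (0:ℝ) 1 | |M - m x| ≤ ε} ≤ ENNReal.ofReal (Q * ε))
    (hx₀ : ∃ x₀ ∈ Set.Icc (0:ℝ) 1, m x₀ = M) :
    Q * L ≥ 1 := by
  obtain ⟨x₀, hx₀I, hx₀M⟩ := hx₀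
  set ε : ℝ := min L 1 / 2 with hε
  have hε0 : 0 < ε := by positivity
  have hε1 : ε < 1 := by
    have : min L 1 ≤ 1 := min_le_right _ _
    simp only [hε]; linarith
  set r : ℝ := ε / L with hr
  have hr0 : 0 < r := by positivity
  have hrhalf : r ≤ 1 / 2 := by
    rw [hr, hε, div_le_iff₀ hL]
    have : min L 1 ≤ L := min_le_left _ _
    linarith
  -- key bound: for y ∈ [0,1], |M - m y| ≤ L * |x₀ - y|
  have key : ∀ y ∈ Set.Icc (0:ℝ) 1, |M - m y| ≤ L * |x₀ - y| := by
    intro y hy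
    have := hlip x₀ hx₀I y hy
    rw [hx₀M, sub_self, abs_zero, max_eq_right (by positivity)] at this
    exact this
  -- choose an interval [a, a+r] ⊆ [0,1] around x₀
  obtain ⟨a, ha0, ha1, hax⟩ :
      ∃ a : ℝ, 0 ≤ a ∧ a + r ≤ 1 ∧ ∀ y ∈ Set.Icc a (a + r), |x₀ - y| ≤ r := by
    obtain ⟨h0, h1⟩ := hx₀I
    by_cases h : x₀ + r ≤ 1
    · exact ⟨x₀, h0, h, by
        intro y hy
        rw [abs_sub_comm, abs_le]
        constructor <;> [linarith [hy.1]; linarith [hy.2]]⟩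
    · refine ⟨x₀ - r, by linarith, by linarith, ?_⟩
      intro y hy
      rw [abs_le]
      constructor <;> [linarith [hy.2]; linarith [hy.1]]
  -- the interval is in the margin set
  have hsub : Set.Icc a (a + r) ⊆ {x ∈ Set.Icc (0:ℝ) 1 | |M - m x| ≤ ε} := by
    intro y hy
    have hyI : y ∈ Set.Icc (0:ℝ) 1 :=
      ⟨le_trans ha0 hy.1, le_trans hy.2 ha1⟩
    refine ⟨hyI, ?_⟩
    calc |M - m y| ≤ L * |x₀ - y| := key y hyI
      _ ≤ L * r := by
          have := hax y hy
          nlinarith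
      _ = ε := by rw [hr]; field_simp
  have hvol : ENNReal.ofReal r ≤ volume {x ∈ Set.Icc (0:ℝ) 1 | |M - m x| ≤ ε} := by
    calc ENNReal.ofReal r = volume (Set.Icc a (a + r)) := by
          rw [Real.volume_Icc]; ring_nf
      _ ≤ _ := measure_mono hsub
  have hle : ENNReal.ofReal r ≤ ENNReal.ofReal (Q * ε) :=
    le_trans hvol (hmargin ε ⟨hε0, hε1⟩)
  have hre : r ≤ Q * ε := by
    rw [ENNReal.ofReal_le_ofReal_iff (by positivity)] at hle
    exact hle
  rw [hr, div_le_iff₀ hL] at hre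
  have : 1 ≤ Q * L := by nlinarith
  linarith
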